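/- Let k ≥ 2, a ≥ 0, and F_k(λ) = λ^k/(λ + a). Then for all v, v' ∈ ℝ³, |F_k(⟨v⟩²) - F_k(⟨v'⟩²)| ≤ 2k · F_{k-1/2}(2(⟨v⟩² + |v - v'|²)) · |v - v'|, where ⟨v⟩² = 1 + |v|². -/

import Mathlib

lemma mvt_key (k a M : ℝ) (hk : 2 ≤ k) (ha : 0 ≤ a) (hM : 1 ≤ M)
    {x y : ℝ} (hx : x ∈ Set.Icc (1:ℝ) M) (hy : y ∈ Set.Icc (1:ℝ) M) :
    |x ^ k / (x + a) - y ^ k / (y + a)| ≤ (k * M ^ (k - 1) / (M + a)) * |x - y| := by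
  set C : ℝ := k * M ^ (k - 1) / (M + a) with hC
  have hMpos : (0:ℝ) < M := lt_of_lt_of_le one_pos hM
  have hMa : (0:ℝ) < M + a := by linarith
  have hderiv : ∀ t ∈ Set.Icc (1:ℝ) M,
      HasDerivAt (fun s : ℝ => s ^ k / (s + a))
        ((k * t ^ (k-1) * (t + a) - t ^ k * 1) / (t + a) ^ 2) t := by
    intro t ht
    have ht0 : (0:ℝ) < t := lt_of_lt_of_le one_pos ht.1
    have hta : t + a ≠ 0 := by positivity
    exact (Real.hasDerivAt_rpow_const (Or.inl (ne_of_gt ht0))).div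
      ((hasDerivAt_id t).add_const a) hta
  have hbound : ∀ t ∈ Set.Icc (1:ℝ) M,
      ‖(k * t ^ (k-1) * (t + a) - t ^ k * 1) / (t + a) ^ 2‖ ≤ C := by
    intro t ht
    have ht1 : (1:ℝ) ≤ t := ht.1
    have ht0 : (0:ℝ) < t := lt_of_lt_of_le one_pos ht1
    have hta : (0:ℝ) < t + a := by linarith
    have htk1 : (0:ℝ) < t ^ (k-1) := Real.rpow_pos_of_pos ht0 _
    have hnum_nonneg : 0 ≤ k * t ^ (k-1) * (t + a) - t ^ k * 1 := by
      have h1 : t ^ k = t ^ (k-1) * t := by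
        rw [← Real.rpow_add_one (ne_of_gt ht0)]; ring_nf
      have h2 : t ^ (k-1) * t ≤ k * t ^ (k-1) * (t + a) := by
        have : t ^ (k-1) * t ≤ 1 * t ^ (k-1) * (t + a) := by nlinarith
        nlinarith [mul_nonneg (by linarith : (0:ℝ) ≤ k - 1) (le_of_lt (mul_pos htk1 hta))]
      rw [h1]; nlinarith
    rw [Real.norm_eq_abs, abs_of_nonneg (by positivity)]
    have step1 : (k * t ^ (k-1) * (t + a) - t ^ k * 1) / (t + a) ^ 2
        ≤ k * t ^ (k-1) / (t + a) := by
      rw [div_le_div_iff₀ (by positivity) hta]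
      have htkp : (0:ℝ) < t ^ k := Real.rpow_pos_of_pos ht0 _
      nlinarith [sq_nonneg (t+a)]
    have step2 : k * t ^ (k-1) / (t + a) ≤ C := by
      rw [hC, div_le_div_iff₀ hta hMa]
      have hk0 : (0:ℝ) < k := by linarith
      have key : t ^ (k-1) * (M + a) ≤ M ^ (k-1) * (t + a) := by
        have h1 : t ^ (k-1) * a ≤ M ^ (k-1) * a := by
          have := Real.rpow_le_rpow (le_of_lt ht0) ht.2 (by linarith : (0:ℝ) ≤ k - 1)
          nlinarith
        have h2 : t ^ (k-1) * M ≤ M ^ (k-1) * t := by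
          have e1 : t ^ (k-1) = t ^ (k-2) * t := by
            rw [← Real.rpow_add_one (ne_of_gt ht0)]; ring_nf
          have e2 : M ^ (k-1) = M ^ (k-2) * M := by
            rw [← Real.rpow_add_one (ne_of_gt hMpos)]; ring_nf
          have h3 : t ^ (k-2) ≤ M ^ (k-2) :=
            Real.rpow_le_rpow (le_of_lt ht0) ht.2 (by linarith)
          have h4 : (0:ℝ) < t ^ (k-2) := Real.rpow_pos_of_pos ht0 _
          rw [e1, e2]
          have h5 : t ^ (k-2) * (t * M) ≤ M ^ (k-2) * (t * M) :=
            mul_le_mul_of_nonneg_right h3 (le_of_lt (mul_pos ht0 hMpos))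
          nlinarith [h5]
        nlinarith
      nlinarith
    linarith
  have := Convex.norm_image_sub_le_of_norm_hasDerivWithin_le
    (f := fun s : ℝ => s ^ k / (s + a))
    (fun t ht => (hderiv t ht).hasDerivWithinAt) hbound (convex_Icc 1 M) hy hx
  simpa [Real.norm_eq_abs, abs_sub_comm] using this

/-- The weight difference estimate
|F_k(⟨v⟩²) - F_k(⟨v'⟩²)| ≤ 2k F_{k-1/2}(2(⟨v⟩² + |v-v'|²)) |v - v'|
where F_k(λ) = λ^k/(λ+a) and ⟨v⟩² = 1 + |v|². -/
theorem stmt_8 (k a : ℝ) (hk : 2 ≤ k) (ha : 0 ≤ a)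
    (v v' : EuclideanSpace ℝ (Fin 3)) :
    |((1 + ‖v‖^2) ^ k / ((1 + ‖v‖^2) + a)) - ((1 + ‖v'‖^2) ^ k / ((1 + ‖v'‖^2) + a))|
      ≤ 2 * k * ((2 * ((1 + ‖v‖^2) + ‖v - v'‖^2)) ^ (k - 1/2)
          / (2 * ((1 + ‖v‖^2) + ‖v - v'‖^2) + a)) * ‖v - v'‖ := by
  set x : ℝ := 1 + ‖v‖^2 with hxdef
  set y : ℝ := 1 + ‖v'‖^2 with hydef
  set d : ℝ := ‖v - v'‖ with hddef
  set M : ℝ := 2 * (x + d^2) with hMdef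
  have hv0 : (0:ℝ) ≤ ‖v‖ := norm_nonneg _
  have hv'0 : (0:ℝ) ≤ ‖v'‖ := norm_nonneg _
  have hd0 : (0:ℝ) ≤ d := norm_nonneg _
  have hx1 : (1:ℝ) ≤ x := by simp [hxdef]
  have hy1 : (1:ℝ) ≤ y := by simp [hydef]
  have hM1 : (1:ℝ) ≤ M := by simp only [hMdef]; nlinarith
  have hMpos : (0:ℝ) < M := lt_of_lt_of_le one_pos hM1
  have hv' : ‖v'‖ ≤ ‖v‖ + d := by
    have : v' = v - (v - v') := by abel
    calc ‖v'‖ = ‖v - (v - v')‖ := by rw [← this]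
    _ ≤ ‖v‖ + ‖v - v'‖ := norm_sub_le _ _
  have hxM : x ≤ M := by simp only [hMdef]; nlinarith
  have hyM : y ≤ M := by
    simp only [hMdef, hydef, hxdef]
    nlinarith [pow_le_pow_left₀ hv'0 hv' 2, sq_nonneg (‖v‖ - d)]
  have key := mvt_key k a M hk ha hM1 ⟨hx1, hxM⟩ ⟨hy1, hyM⟩
  -- |x - y| ≤ (‖v‖ + ‖v'‖) * d
  have hxy : |x - y| ≤ (‖v‖ + ‖v'‖) * d := by
    have h1 : x - y = (‖v‖ - ‖v'‖) * (‖v‖ + ‖v'‖) := by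
      simp only [hxdef, hydef]; ring
    rw [h1, abs_mul, abs_of_nonneg (by positivity : (0:ℝ) ≤ ‖v‖ + ‖v'‖)]
    have h2 : |‖v‖ - ‖v'‖| ≤ d := abs_norm_sub_norm_le v v'
    nlinarith [abs_nonneg (‖v‖ - ‖v'‖)]
  have hsqrt : ‖v‖ + ‖v'‖ ≤ 2 * Real.sqrt M := by
    have h1 : ‖v‖ ≤ Real.sqrt M := by
      rw [show ‖v‖ = Real.sqrt (‖v‖^2) from (Real.sqrt_sq hv0).symm]
      apply Real.sqrt_le_sqrt; simp only [hMdef, hxdef]; nlinarith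
    have h2 : ‖v'‖ ≤ Real.sqrt M := by
      rw [show ‖v'‖ = Real.sqrt (‖v'‖^2) from (Real.sqrt_sq hv'0).symm]
      apply Real.sqrt_le_sqrt
      have : ‖v'‖^2 ≤ (‖v‖ + d)^2 := by nlinarith
      simp only [hMdef, hxdef]; nlinarith
    linarith
  have hMa : (0:ℝ) < M + a := by linarith
  have hrw : M ^ (k - 1) * Real.sqrt M = M ^ (k - 1/2) := by
    rw [Real.sqrt_eq_rpow, ← Real.rpow_add hMpos]
    congr 1; ring
  have hk0 : (0:ℝ) ≤ k := by linarith
  have hCnn : (0:ℝ) ≤ k * M ^ (k-1) / (M + a) := by positivity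
  calc |x ^ k / (x + a) - y ^ k / (y + a)|
      ≤ (k * M ^ (k - 1) / (M + a)) * |x - y| := key
    _ ≤ (k * M ^ (k - 1) / (M + a)) * ((‖v‖ + ‖v'‖) * d) :=
        mul_le_mul_of_nonneg_left hxy hCnn
    _ ≤ (k * M ^ (k - 1) / (M + a)) * (2 * Real.sqrt M * d) :=
        mul_le_mul_of_nonneg_left (mul_le_mul_of_nonneg_right hsqrt hd0) hCnn
    _ = 2 * k * (M ^ (k - 1/2) / (M + a)) * d := by
        rw [← hrw]; field_simp
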